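/- arXiv:1711.10363 — 5 statements merged into one kernel-verified Lean document; each statement's English description precedes it below -/
import Mathlib

section
/- Let (Ω, μ) and (Ω̃, μ̃) be probability spaces and for each n ≥ 1 let S_n : Ω → ℝ and S̃_n : Ω̃ → ℝ be measurable, with exp(sS_n) and exp(sS̃_n) integrable for every s > 0 and every n. Assume that for every n and every convex f : ℝ → ℝ such that f∘S_n and f∘S̃_n are integrable, E[f(S_n)] ≤ E[f(S̃_n)]. Define κ(s) = limsup_{n→∞}(1/n)·log E[exp(sS_n)] and κ̃(s) = limsup_{n→∞}(1/n)·log E[exp(sS̃_n)], and suppose the sets A = {s > 0 : κ(s) ≤ 0} and Ã = {s > 0 : κ̃(s) ≤ 0} are nonempty and bounded above. Then the adjustment coefficients θ = sup A and θ̃ = sup Ã satisfy θ̃ ≤ θ. -/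
open MeasureTheory Real Filter

/-- The map `x ↦ exp (s * x)` is convex on `ℝ`. -/
lemma aux_convexOn_exp_mul (s : ℝ) : ConvexOn ℝ Set.univ (fun x : ℝ => Real.exp (s * x)) := by
  refine ⟨convex_univ, ?_⟩
  intro x _ y _ a b ha hb hab
  have h := convexOn_exp.2 (Set.mem_univ (s * x)) (Set.mem_univ (s * y)) ha hb hab
  simp only [smul_eq_mul] at h ⊢
  have hx : s * (a * x + b * y) = a * (s * x) + b * (s * y) := by ring
  rw [hx]
  exact h

/-- Lyapunov's inequality for exponential moments: for `0 < s ≤ t`,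
`(E[exp (s X)])^(t/s) ≤ E[exp (t X)]`. -/
lemma aux_lyapunov {Ω : Type*} [MeasurableSpace Ω] (μ : Measure Ω) [IsProbabilityMeasure μ]
    (X : Ω → ℝ) (s t : ℝ) (hs : 0 < s) (hst : s ≤ t)
    (h1 : Integrable (fun ω => Real.exp (s * X ω)) μ)
    (h2 : Integrable (fun ω => Real.exp (t * X ω)) μ) :
    (∫ ω, Real.exp (s * X ω) ∂μ) ^ (t / s) ≤ ∫ ω, Real.exp (t * X ω) ∂μ := by
  have hr : (1 : ℝ) ≤ t / s := (one_le_div hs).2 hst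
  have hr0 : (0 : ℝ) ≤ t / s := le_trans zero_le_one hr
  have hkey : ∀ ω, (Real.exp (s * X ω)) ^ (t / s) = Real.exp (t * X ω) := by
    intro ω
    rw [← Real.exp_mul]
    congr 1
    field_simp
  have hgi : Integrable ((fun x : ℝ => x ^ (t / s)) ∘ fun ω => Real.exp (s * X ω)) μ := by
    have heq : ((fun x : ℝ => x ^ (t / s)) ∘ fun ω => Real.exp (s * X ω))
        = fun ω => Real.exp (t * X ω) := funext fun ω => hkey ω
    rw [heq]; exact h2
  have hjensen := (convexOn_rpow hr).map_integral_le
    (f := fun ω => Real.exp (s * X ω))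
    (fun x _ => (Real.continuousAt_rpow_const x (t / s) (Or.inr hr0)).continuousWithinAt)
    isClosed_Ici
    (Filter.Eventually.of_forall fun ω => Set.mem_Ici.2 (Real.exp_pos _).le)
    h1 hgi
  calc (∫ ω, Real.exp (s * X ω) ∂μ) ^ (t / s)
      ≤ ∫ ω, (Real.exp (s * X ω)) ^ (t / s) ∂μ := hjensen
    _ = ∫ ω, Real.exp (t * X ω) ∂μ := by simp only [hkey]

/-- Adjustment-coefficient ordering theorem: convex ordering of the cumulative
(net increment) processes implies the corresponding ordering `θ̃ ≤ θ` of the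
adjustment coefficients, defined as suprema of the sets where the limiting
log-moment-generating-rate functions are nonpositive. -/
theorem adjustment_coefficient_ordering
    {Ω : Type*} [MeasurableSpace Ω] (μ : Measure Ω) [IsProbabilityMeasure μ]
    {Ω' : Type*} [MeasurableSpace Ω'] (μ' : Measure Ω') [IsProbabilityMeasure μ']
    (S : ℕ → Ω → ℝ) (S' : ℕ → Ω' → ℝ)
    (hS : ∀ n, Measurable (S n)) (hS' : ∀ n, Measurable (S' n))
    (hint : ∀ s : ℝ, 0 < s → ∀ n, 1 ≤ n → Integrable (fun ω => Real.exp (s * S n ω)) μ)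
    (hint' : ∀ s : ℝ, 0 < s → ∀ n, 1 ≤ n → Integrable (fun ω => Real.exp (s * S' n ω)) μ')
    (hcx : ∀ n, 1 ≤ n → ∀ f : ℝ → ℝ, ConvexOn ℝ Set.univ f →
      Integrable (fun ω => f (S n ω)) μ → Integrable (fun ω => f (S' n ω)) μ' →
      ∫ ω, f (S n ω) ∂μ ≤ ∫ ω, f (S' n ω) ∂μ')
    (κ κ' : ℝ → ℝ)
    (hκ : ∀ s : ℝ, κ s = Filter.limsup
      (fun n : ℕ => (1 / (n : ℝ)) * Real.log (∫ ω, Real.exp (s * S n ω) ∂μ)) Filter.atTop)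
    (hκ' : ∀ s : ℝ, κ' s = Filter.limsup
      (fun n : ℕ => (1 / (n : ℝ)) * Real.log (∫ ω, Real.exp (s * S' n ω) ∂μ')) Filter.atTop)
    (hA_ne : {s : ℝ | 0 < s ∧ κ s ≤ 0}.Nonempty)
    (hA_bdd : BddAbove {s : ℝ | 0 < s ∧ κ s ≤ 0})
    (hA'_ne : {s : ℝ | 0 < s ∧ κ' s ≤ 0}.Nonempty)
    (hA'_bdd : BddAbove {s : ℝ | 0 < s ∧ κ' s ≤ 0}) :
    sSup {s : ℝ | 0 < s ∧ κ' s ≤ 0} ≤ sSup {s : ℝ | 0 < s ∧ κ s ≤ 0} := by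
  -- notation for the log-mgf rate sequences
  set u : ℝ → ℕ → ℝ :=
    fun s n => (1 / (n : ℝ)) * Real.log (∫ ω, Real.exp (s * S n ω) ∂μ) with hu
  set u' : ℝ → ℕ → ℝ :=
    fun s n => (1 / (n : ℝ)) * Real.log (∫ ω, Real.exp (s * S' n ω) ∂μ') with hu'
  -- positivity of the mgf's
  have hpos : ∀ s : ℝ, 0 < s → ∀ n, 1 ≤ n → 0 < ∫ ω, Real.exp (s * S n ω) ∂μ := by
    intro s hs n hn
    exact integral_exp_pos (hint s hs n hn)
  have hpos' : ∀ s : ℝ, 0 < s → ∀ n, 1 ≤ n → 0 < ∫ ω, Real.exp (s * S' n ω) ∂μ' := by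
    intro s hs n hn
    exact integral_exp_pos (hint' s hs n hn)
  -- the pointwise comparison u s n ≤ u' s n from convex ordering
  have hle : ∀ s : ℝ, 0 < s → ∀ n : ℕ, u s n ≤ u' s n := by
    intro s hs n
    rcases Nat.eq_zero_or_pos n with h0 | h1
    · simp [hu, hu', h0]
    · have hmgf : ∫ ω, Real.exp (s * S n ω) ∂μ ≤ ∫ ω, Real.exp (s * S' n ω) ∂μ' := by
        have := hcx n h1 (fun x => Real.exp (s * x)) (aux_convexOn_exp_mul s)
          (hint s hs n h1) (hint' s hs n h1)
        simpa using this
      have hlog := Real.log_le_log (hpos s hs n h1) hmgf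
      have hn0 : (0 : ℝ) ≤ 1 / (n : ℝ) := by positivity
      exact mul_le_mul_of_nonneg_left hlog hn0
  apply csSup_le_csSup hA_bdd hA'_ne
  rintro s ⟨hs0, hκ's⟩
  refine ⟨hs0, ?_⟩
  rw [hκ s, Filter.limsup_eq]
  rw [hκ' s, Filter.limsup_eq] at hκ's
  set T : Set ℝ := {a | ∀ᶠ n in atTop, u s n ≤ a} with hT
  set T' : Set ℝ := {a | ∀ᶠ n in atTop, u' s n ≤ a} with hT'
  by_cases hT'ne : T'.Nonempty
  · -- honest case: the set of eventual upper bounds for u' s is nonempty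
    have hsub : T' ⊆ T := by
      intro a ha
      exact ha.mono fun n hn => le_trans (hle s hs0 n) hn
    by_cases hbb : BddBelow T
    · exact le_trans (csInf_le_csInf hbb hT'ne hsub) hκ's
    · rw [Real.sInf_of_not_bddBelow hbb]
  · -- degenerate case: u' s is not eventually bounded above; then every t ≥ s lies in
    -- the set {t | 0 < t ∧ κ' t ≤ 0}, contradicting its boundedness.
    exfalso
    obtain ⟨B, hB⟩ := hA'_bdd
    set t : ℝ := max s (B + 1) with ht
    have hst : s ≤ t := le_max_left _ _
    have ht0 : 0 < t := lt_of_lt_of_le hs0 hst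
    have htA : t ∈ {r : ℝ | 0 < r ∧ κ' r ≤ 0} := by
      refine ⟨ht0, ?_⟩
      rw [hκ' t, Filter.limsup_eq]
      have hempty : {a : ℝ | ∀ᶠ n in atTop, u' t n ≤ a} = ∅ := by
        by_contra hne
        obtain ⟨a, ha⟩ := Set.nonempty_iff_ne_empty.2 hne
        apply hT'ne
        refine ⟨(s / t) * a, ?_⟩
        filter_upwards [ha, Filter.eventually_ge_atTop 1] with n han hn1
        -- Lyapunov: (E[e^{sX}])^{t/s} ≤ E[e^{tX}]
        have hlya := aux_lyapunov μ' (S' n) s t hs0 hst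
          (hint' s hs0 n hn1) (hint' t ht0 n hn1)
        have hEs := hpos' s hs0 n hn1
        have hlog : (t / s) * Real.log (∫ ω, Real.exp (s * S' n ω) ∂μ')
            ≤ Real.log (∫ ω, Real.exp (t * S' n ω) ∂μ') := by
          rw [← Real.log_rpow hEs]
          exact Real.log_le_log (Real.rpow_pos_of_pos hEs _) hlya
        have hlog' : Real.log (∫ ω, Real.exp (s * S' n ω) ∂μ')
            ≤ (s / t) * Real.log (∫ ω, Real.exp (t * S' n ω) ∂μ') := by
          have hts : 0 < t / s := div_pos ht0 hs0
          have := mul_le_mul_of_nonneg_left hlog (le_of_lt (div_pos hs0 ht0))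
          calc Real.log (∫ ω, Real.exp (s * S' n ω) ∂μ')
              = (s / t) * ((t / s) * Real.log (∫ ω, Real.exp (s * S' n ω) ∂μ')) := by
                field_simp
            _ ≤ (s / t) * Real.log (∫ ω, Real.exp (t * S' n ω) ∂μ') := this
        have hn0 : (0 : ℝ) ≤ 1 / (n : ℝ) := by positivity
        have : u' s n ≤ (s / t) * u' t n := by
          have := mul_le_mul_of_nonneg_left hlog' hn0
          simp only [hu']
          calc (1 / (n : ℝ)) * Real.log (∫ ω, Real.exp (s * S' n ω) ∂μ')
              ≤ (1 / (n : ℝ)) * ((s / t) * Real.log (∫ ω, Real.exp (t * S' n ω) ∂μ')) := this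
            _ = (s / t) * ((1 / (n : ℝ)) * Real.log (∫ ω, Real.exp (t * S' n ω) ∂μ')) := by ring
        refine le_trans this ?_
        exact mul_le_mul_of_nonneg_left han (le_of_lt (div_pos hs0 ht0))
      rw [hempty, Real.sInf_empty]
    have := hB htA
    have : B + 1 ≤ B := le_trans (le_max_right s (B + 1)) this
    linarith
end

section
/- Let n ≥ 1 and let X, Y : Ω → (Fin n → ℝ) be random vectors (on possibly different probability spaces) such that for every measurable supermodular function f : (Fin n → ℝ) → ℝ for which f∘X and f∘Y are integrable, E[f(X)] ≤ E[f(Y)]. Then for every convex function g : ℝ → ℝ such that g(Σ_{i} X_i) and g(Σ_i Y_i) are integrable, E[g(Σ_{i=1}^n X_i)] ≤ E[g(Σ_{i=1}^n Y_i)]. -/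
open MeasureTheory

lemma convex_pair_ineq {g : ℝ → ℝ} (hg : ConvexOn ℝ Set.univ g)
    {a s b : ℝ} (has : a ≤ s) (hsb : s ≤ b) :
    g s + g (a + b - s) ≤ g a + g b := by
  rcases eq_or_lt_of_le (has.trans hsb) with h | h
  · have h1 : s = a := le_antisymm (hsb.trans h.ge) has
    rw [h1]
    simp
  · set d := b - a with hd
    have hdpos : 0 < d := by simp [hd]; linarith
    set l := (b - s) / d with hl
    set m := (s - a) / d with hm
    have hl0 : 0 ≤ l := div_nonneg (by linarith) hdpos.le
    have hm0 : 0 ≤ m := div_nonneg (by linarith) hdpos.le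
    have hlm : l + m = 1 := by rw [hl, hm]; field_simp; linarith
    have hs : l • a + m • b = s := by
      rw [smul_eq_mul, smul_eq_mul, hl, hm, div_mul_eq_mul_div, div_mul_eq_mul_div, ← add_div, div_eq_iff hdpos.ne', hd]; ring
    have ht : m • a + l • b = a + b - s := by
      rw [smul_eq_mul, smul_eq_mul, hl, hm, div_mul_eq_mul_div, div_mul_eq_mul_div, ← add_div, div_eq_iff hdpos.ne', hd]; ring
    have h1 := hg.2 (Set.mem_univ a) (Set.mem_univ b) hl0 hm0 hlm
    have h2 := hg.2 (Set.mem_univ a) (Set.mem_univ b) hm0 hl0 (by linarith)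
    rw [hs] at h1; rw [ht] at h2
    calc g s + g (a + b - s) ≤ (l • g a + m • g b) + (m • g a + l • g b) := add_le_add h1 h2
      _ = g a + g b := by
          simp only [smul_eq_mul]; linear_combination g a * hlm + g b * hlm

/-- Supermodular ordering of random vectors implies convex ordering of the sums of
their components: if `E[f(X)] ≤ E[f(Y)]` for all measurable supermodular `f`, then
`E[g(Σᵢ Xᵢ)] ≤ E[g(Σᵢ Yᵢ)]` for all convex `g` (with integrability side conditions). -/
theorem supermodular_order_implies_convex_order_of_sum
    {n : ℕ} (hn : 1 ≤ n)
    {Ω : Type*} [MeasurableSpace Ω] (μ : Measure Ω) [IsProbabilityMeasure μ]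
    {Ω' : Type*} [MeasurableSpace Ω'] (μ' : Measure Ω') [IsProbabilityMeasure μ']
    (X : Ω → (Fin n → ℝ)) (Y : Ω' → (Fin n → ℝ))
    (hX : Measurable X) (hY : Measurable Y)
    (hsm : ∀ f : (Fin n → ℝ) → ℝ, Measurable f →
      (∀ x y : Fin n → ℝ, f x + f y ≤ f (x ⊔ y) + f (x ⊓ y)) →
      Integrable (fun ω => f (X ω)) μ → Integrable (fun ω => f (Y ω)) μ' →
      ∫ ω, f (X ω) ∂μ ≤ ∫ ω, f (Y ω) ∂μ') :
    ∀ g : ℝ → ℝ, ConvexOn ℝ Set.univ g →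
      Integrable (fun ω => g (∑ i, X ω i)) μ → Integrable (fun ω => g (∑ i, Y ω i)) μ' →
      ∫ ω, g (∑ i, X ω i) ∂μ ≤ ∫ ω, g (∑ i, Y ω i) ∂μ' := by
  intro g hg hgX hgY
  have hgc : Continuous g := hg.locallyLipschitz.continuous
  set f : (Fin n → ℝ) → ℝ := fun x => g (∑ i, x i) with hf
  have hfmeas : Measurable f :=
    hgc.measurable.comp (Finset.measurable_sum _ fun i _ => measurable_pi_apply i)
  have hsup : ∀ x y : Fin n → ℝ, f x + f y ≤ f (x ⊔ y) + f (x ⊓ y) := by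
    intro x y
    have hkey : ∀ i, (x ⊔ y) i + (x ⊓ y) i = x i + y i := by
      intro i
      simp [Pi.sup_apply, Pi.inf_apply, max_add_min]
    have hsumeq : (∑ i, (x ⊔ y) i) + (∑ i, (x ⊓ y) i) = (∑ i, x i) + (∑ i, y i) := by
      rw [← Finset.sum_add_distrib, ← Finset.sum_add_distrib]
      exact Finset.sum_congr rfl fun i _ => hkey i
    have hax : (∑ i, (x ⊓ y) i) ≤ ∑ i, x i :=
      Finset.sum_le_sum fun i _ => inf_le_left
    have hxb : (∑ i, x i) ≤ ∑ i, (x ⊔ y) i :=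
      Finset.sum_le_sum fun i _ => le_sup_left
    have := convex_pair_ineq hg hax hxb
    have hyeq : (∑ i, (x ⊓ y) i) + (∑ i, (x ⊔ y) i) - (∑ i, x i) = ∑ i, y i := by
      linarith
    rw [hyeq] at this
    simp only [hf]
    linarith
  exact hsm f hfmeas hsup hgX hgY
end

section
/- Define α, β : ℝ → ℝ by α(h) = e^{−2h}(1 − e^{−h})/2 and β(h) = e^{−2h}(1 + e^{−h})/2. Then for all h₁, h₂ ∈ ℝ: α(h₁ + h₂) = β(h₁)α(h₂) + α(h₁)β(h₂) and β(h₁ + h₂) = α(h₁)α(h₂) + β(h₁)β(h₂). Moreover, for every h ≥ 0, α(h) ≥ 0, β(h) ≥ 0, and α(h) + β(h) ≤ 1. -/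
open Real

/-- The pair `α(h) = e^{−2h}(1 − e^{−h})/2`, `β(h) = e^{−2h}(1 + e^{−h})/2` solves
the Fréchet Markov-family functional equations and satisfies the copula
convex-combination constraints for `h ≥ 0`. -/
theorem frechet_markov_family_solution :
    (∀ h₁ h₂ : ℝ,
      Real.exp (-2 * (h₁ + h₂)) * (1 - Real.exp (-(h₁ + h₂))) / 2 =
        (Real.exp (-2 * h₁) * (1 + Real.exp (-h₁)) / 2) *
            (Real.exp (-2 * h₂) * (1 - Real.exp (-h₂)) / 2) +
          (Real.exp (-2 * h₁) * (1 - Real.exp (-h₁)) / 2) *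
            (Real.exp (-2 * h₂) * (1 + Real.exp (-h₂)) / 2)) ∧
    (∀ h₁ h₂ : ℝ,
      Real.exp (-2 * (h₁ + h₂)) * (1 + Real.exp (-(h₁ + h₂))) / 2 =
        (Real.exp (-2 * h₁) * (1 - Real.exp (-h₁)) / 2) *
            (Real.exp (-2 * h₂) * (1 - Real.exp (-h₂)) / 2) +
          (Real.exp (-2 * h₁) * (1 + Real.exp (-h₁)) / 2) *
            (Real.exp (-2 * h₂) * (1 + Real.exp (-h₂)) / 2)) ∧
    (∀ h : ℝ, 0 ≤ h →
      0 ≤ Real.exp (-2 * h) * (1 - Real.exp (-h)) / 2 ∧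
      0 ≤ Real.exp (-2 * h) * (1 + Real.exp (-h)) / 2 ∧
      Real.exp (-2 * h) * (1 - Real.exp (-h)) / 2 +
        Real.exp (-2 * h) * (1 + Real.exp (-h)) / 2 ≤ 1) := by
  refine ⟨?_, ?_, ?_⟩
  · intro h₁ h₂
    rw [show -2 * (h₁ + h₂) = -2 * h₁ + -2 * h₂ by ring,
        show -(h₁ + h₂) = -h₁ + -h₂ by ring, Real.exp_add, Real.exp_add]
    ring
  · intro h₁ h₂
    rw [show -2 * (h₁ + h₂) = -2 * h₁ + -2 * h₂ by ring,
        show -(h₁ + h₂) = -h₁ + -h₂ by ring, Real.exp_add, Real.exp_add]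
    ring
  · intro h hh
    have h1 : Real.exp (-h) ≤ 1 := Real.exp_le_one_iff.mpr (by linarith)
    have h2 : Real.exp (-2 * h) ≤ 1 := Real.exp_le_one_iff.mpr (by linarith)
    have h3 := Real.exp_pos (-h)
    have h4 := Real.exp_pos (-2 * h)
    refine ⟨by nlinarith, by positivity, by nlinarith⟩
end

section
/- Define a, b : ℝ → ℝ by a(α) = α²(1 − α)/2 and b(α) = α²(1 + α)/2. Then for all α₁, α₂ ∈ ℝ: a(α₁α₂) = b(α₁)a(α₂) + a(α₁)b(α₂) and b(α₁α₂) = a(α₁)a(α₂) + b(α₁)b(α₂). Moreover, for every α ∈ [−1, 1], a(α) ≥ 0, b(α) ≥ 0, and a(α) + b(α) ≤ 1. -/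
/-- The one-parameter Fréchet copula coefficients `a(α) = α²(1−α)/2` and
`b(α) = α²(1+α)/2` satisfy the Markov ⋆-product functional equations with
parameter multiplication, and give a valid convex combination for `α ∈ [−1, 1]`. -/
theorem one_parameter_frechet_copula_coeffs :
    (∀ α₁ α₂ : ℝ,
      (α₁ * α₂) ^ 2 * (1 - α₁ * α₂) / 2 =
        (α₁ ^ 2 * (1 + α₁) / 2) * (α₂ ^ 2 * (1 - α₂) / 2) +
          (α₁ ^ 2 * (1 - α₁) / 2) * (α₂ ^ 2 * (1 + α₂) / 2)) ∧
    (∀ α₁ α₂ : ℝ,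
      (α₁ * α₂) ^ 2 * (1 + α₁ * α₂) / 2 =
        (α₁ ^ 2 * (1 - α₁) / 2) * (α₂ ^ 2 * (1 - α₂) / 2) +
          (α₁ ^ 2 * (1 + α₁) / 2) * (α₂ ^ 2 * (1 + α₂) / 2)) ∧
    (∀ α : ℝ, α ∈ Set.Icc (-1 : ℝ) 1 →
      0 ≤ α ^ 2 * (1 - α) / 2 ∧ 0 ≤ α ^ 2 * (1 + α) / 2 ∧
        α ^ 2 * (1 - α) / 2 + α ^ 2 * (1 + α) / 2 ≤ 1) := by
  refine ⟨fun α₁ α₂ => by ring, fun α₁ α₂ => by ring, fun α h => ?_⟩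
  obtain ⟨h1, h2⟩ := h
  refine ⟨?_, ?_, ?_⟩ <;> nlinarith [sq_nonneg α, sq_nonneg (1 - α), sq_nonneg (1 + α)]
end

section
/- Let x, y ∈ [0, 1], let α₁, β₁, α₂, β₂ ≥ 0 with α₁ + β₁ ≤ 1 and α₂ + β₂ ≤ 1, and set γ₁ = 1 − α₁ − β₁, γ₂ = 1 − α₂ − β₂. Then ∫₀¹ (α₁·1_{(1−x,1]}(ξ) + γ₁·x + β₁·1_{[0,x)}(ξ)) · (α₂·1_{(1−y,1]}(ξ) + γ₂·y + β₂·1_{[0,y)}(ξ)) dξ = α₃·max(x + y − 1, 0) + γ₃·xy + β₃·min(x, y), where α₃ = β₁α₂ + α₁β₂, β₃ = α₁α₂ + β₁β₂, and γ₃ = 1 − α₃ − β₃. -/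
open Set MeasureTheory

lemma J_eq (S : Set ℝ) (hS : MeasurableSet S) :
    ∫ ξ in (0:ℝ)..1, S.indicator (fun _ => (1:ℝ)) ξ
      = (volume (S ∩ Set.Ioc 0 1)).toReal := by
  rw [intervalIntegral.integral_of_le zero_le_one,
    MeasureTheory.setIntegral_indicator hS, MeasureTheory.setIntegral_const]
  simp [Set.inter_comm]
  rfl

lemma J_int (S : Set ℝ) (hS : MeasurableSet S) :
    IntervalIntegrable (S.indicator (fun _ => (1:ℝ))) volume 0 1 := by
  rw [intervalIntegrable_iff]
  exact ((MeasureTheory.integrableOn_const_iff (C := (1:ℝ))).mpr (Or.inr (by simp))).indicator hS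


/-- Closure of the Fréchet copula family under the Darsow–Nguyen–Olsen ⋆-product:
the integral of the product of the a.e. partial derivatives of two Fréchet copulas
with parameters `(αᵢ, βᵢ)` is the Fréchet copula with parameters
`α₃ = β₁α₂ + α₁β₂`, `β₃ = α₁α₂ + β₁β₂`. -/
theorem frechet_star_product
    (x y : ℝ) (hx : x ∈ Set.Icc (0 : ℝ) 1) (hy : y ∈ Set.Icc (0 : ℝ) 1)
    (α₁ β₁ α₂ β₂ : ℝ)
    (hα₁ : 0 ≤ α₁) (hβ₁ : 0 ≤ β₁) (hα₂ : 0 ≤ α₂) (hβ₂ : 0 ≤ β₂)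
    (h₁ : α₁ + β₁ ≤ 1) (h₂ : α₂ + β₂ ≤ 1) :
    ∫ ξ in (0 : ℝ)..1,
        (α₁ * Set.indicator (Set.Ioc (1 - x) 1) (fun _ => (1 : ℝ)) ξ +
            (1 - α₁ - β₁) * x +
            β₁ * Set.indicator (Set.Ico 0 x) (fun _ => (1 : ℝ)) ξ) *
          (α₂ * Set.indicator (Set.Ioc (1 - y) 1) (fun _ => (1 : ℝ)) ξ +
            (1 - α₂ - β₂) * y +
            β₂ * Set.indicator (Set.Ico 0 y) (fun _ => (1 : ℝ)) ξ) =
      (β₁ * α₂ + α₁ * β₂) * max (x + y - 1) 0 +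
        (1 - (β₁ * α₂ + α₁ * β₂) - (α₁ * α₂ + β₁ * β₂)) * (x * y) +
        (α₁ * α₂ + β₁ * β₂) * min x y := by
  obtain ⟨hx0, hx1⟩ := hx
  obtain ⟨hy0, hy1⟩ := hy
  set A := Set.Ioc (1 - x) 1 with hAdef
  set B := Set.Ioc (1 - y) 1 with hBdef
  set C := Set.Ico (0:ℝ) x with hCdef
  set D := Set.Ico (0:ℝ) y with hDdef
  have mA : MeasurableSet A := measurableSet_Ioc
  have mB : MeasurableSet B := measurableSet_Ioc
  have mC : MeasurableSet C := measurableSet_Ico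
  have mD : MeasurableSet D := measurableSet_Ico
  -- values of the eight basic integrals
  have vA : ∫ ξ in (0:ℝ)..1, A.indicator (fun _ => (1:ℝ)) ξ = x := by
    rw [J_eq A mA]
    have hs : A ∩ Set.Ioc 0 1 = Set.Ioc (1-x) 1 := by
      ext t
      simp only [hAdef, Set.mem_inter_iff, Set.mem_Ioc]
      constructor
      · rintro ⟨h, _⟩; exact h
      · rintro ⟨h1, h2⟩; exact ⟨⟨h1, h2⟩, by linarith, h2⟩
    rw [hs, Real.volume_Ioc, ENNReal.toReal_ofReal']
    rw [show (1:ℝ) - (1-x) = x by ring, max_eq_left hx0]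
  have vB : ∫ ξ in (0:ℝ)..1, B.indicator (fun _ => (1:ℝ)) ξ = y := by
    rw [J_eq B mB]
    have hs : B ∩ Set.Ioc 0 1 = Set.Ioc (1-y) 1 := by
      ext t
      simp only [hBdef, Set.mem_inter_iff, Set.mem_Ioc]
      constructor
      · rintro ⟨h, _⟩; exact h
      · rintro ⟨h1, h2⟩; exact ⟨⟨h1, h2⟩, by linarith, h2⟩
    rw [hs, Real.volume_Ioc, ENNReal.toReal_ofReal']
    rw [show (1:ℝ) - (1-y) = y by ring, max_eq_left hy0]
  have vC : ∫ ξ in (0:ℝ)..1, C.indicator (fun _ => (1:ℝ)) ξ = x := by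
    rw [J_eq C mC]
    have hs : C ∩ Set.Ioc 0 1 = Set.Ioo 0 x := by
      ext t
      simp only [hCdef, Set.mem_inter_iff, Set.mem_Ico, Set.mem_Ioc, Set.mem_Ioo]
      constructor
      · rintro ⟨⟨_, h2⟩, h3, _⟩; exact ⟨h3, h2⟩
      · rintro ⟨h1, h2⟩; exact ⟨⟨le_of_lt h1, h2⟩, h1, by linarith⟩
    rw [hs, Real.volume_Ioo, ENNReal.toReal_ofReal']
    rw [sub_zero, max_eq_left hx0]
  have vD : ∫ ξ in (0:ℝ)..1, D.indicator (fun _ => (1:ℝ)) ξ = y := by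
    rw [J_eq D mD]
    have hs : D ∩ Set.Ioc 0 1 = Set.Ioo 0 y := by
      ext t
      simp only [hDdef, Set.mem_inter_iff, Set.mem_Ico, Set.mem_Ioc, Set.mem_Ioo]
      constructor
      · rintro ⟨⟨_, h2⟩, h3, _⟩; exact ⟨h3, h2⟩
      · rintro ⟨h1, h2⟩; exact ⟨⟨le_of_lt h1, h2⟩, h1, by linarith⟩
    rw [hs, Real.volume_Ioo, ENNReal.toReal_ofReal']
    rw [sub_zero, max_eq_left hy0]
  have vAB : ∫ ξ in (0:ℝ)..1, (A ∩ B).indicator (fun _ => (1:ℝ)) ξ = min x y := by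
    rw [J_eq _ (mA.inter mB)]
    have hs : (A ∩ B) ∩ Set.Ioc 0 1 = Set.Ioc (max (1-x) (1-y)) 1 := by
      ext t
      simp only [hAdef, hBdef, Set.mem_inter_iff, Set.mem_Ioc, max_lt_iff]
      constructor
      · rintro ⟨⟨⟨h1, h2⟩, h3, _⟩, _⟩; exact ⟨⟨h1, h3⟩, h2⟩
      · rintro ⟨⟨h1, h2⟩, h3⟩
        exact ⟨⟨⟨h1, h3⟩, h2, h3⟩, by linarith, h3⟩
    rw [hs, Real.volume_Ioc, ENNReal.toReal_ofReal']
    have h5 : (1:ℝ) - max (1-x) (1-y) = min x y := by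
      rcases le_total x y with h | h
      · rw [min_eq_left h, max_eq_left (by linarith)]; ring
      · rw [min_eq_right h, max_eq_right (by linarith)]; ring
    rw [h5, max_eq_left (le_min hx0 hy0)]
  have vCD : ∫ ξ in (0:ℝ)..1, (C ∩ D).indicator (fun _ => (1:ℝ)) ξ = min x y := by
    rw [J_eq _ (mC.inter mD)]
    have hs : (C ∩ D) ∩ Set.Ioc 0 1 = Set.Ioo 0 (min x y) := by
      ext t
      simp only [hCdef, hDdef, Set.mem_inter_iff, Set.mem_Ico, Set.mem_Ioc,
        Set.mem_Ioo, lt_min_iff]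
      constructor
      · rintro ⟨⟨⟨_, h2⟩, _, h4⟩, h5, _⟩; exact ⟨h5, h2, h4⟩
      · rintro ⟨h1, h2, h3⟩
        exact ⟨⟨⟨le_of_lt h1, h2⟩, le_of_lt h1, h3⟩, h1, by linarith⟩
    rw [hs, Real.volume_Ioo, ENNReal.toReal_ofReal']
    rw [sub_zero, max_eq_left (le_min hx0 hy0)]
  have vAD : ∫ ξ in (0:ℝ)..1, (A ∩ D).indicator (fun _ => (1:ℝ)) ξ
      = max (x + y - 1) 0 := by
    rw [J_eq _ (mA.inter mD)]
    have hs : (A ∩ D) ∩ Set.Ioc 0 1 = Set.Ioo (1-x) y := by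
      ext t
      simp only [hAdef, hDdef, Set.mem_inter_iff, Set.mem_Ioc, Set.mem_Ico, Set.mem_Ioo]
      constructor
      · rintro ⟨⟨⟨h1, _⟩, _, h4⟩, _⟩; exact ⟨h1, h4⟩
      · rintro ⟨h1, h2⟩
        exact ⟨⟨⟨h1, by linarith⟩, by linarith, h2⟩, by linarith, by linarith⟩
    rw [hs, Real.volume_Ioo, ENNReal.toReal_ofReal']
    rw [show y - (1-x) = x + y - 1 by ring]
  have vCB : ∫ ξ in (0:ℝ)..1, (C ∩ B).indicator (fun _ => (1:ℝ)) ξ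
      = max (x + y - 1) 0 := by
    rw [J_eq _ (mC.inter mB)]
    have hs : (C ∩ B) ∩ Set.Ioc 0 1 = Set.Ioo (1-y) x := by
      ext t
      simp only [hCdef, hBdef, Set.mem_inter_iff, Set.mem_Ico, Set.mem_Ioc, Set.mem_Ioo]
      constructor
      · rintro ⟨⟨⟨_, h2⟩, h3, _⟩, _⟩; exact ⟨h3, h2⟩
      · rintro ⟨h1, h2⟩
        exact ⟨⟨⟨by linarith, h2⟩, h1, by linarith⟩, by linarith, by linarith⟩
    rw [hs, Real.volume_Ioo, ENNReal.toReal_ofReal']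
    rw [show x - (1-y) = x + y - 1 by ring]
  -- integrability of the pieces
  have i1 := (J_int A mA).const_mul (α₁ * ((1 - α₂ - β₂) * y))
  have i2 := (J_int B mB).const_mul (α₂ * ((1 - α₁ - β₁) * x))
  have i3 := (J_int C mC).const_mul (β₁ * ((1 - α₂ - β₂) * y))
  have i4 := (J_int D mD).const_mul (β₂ * ((1 - α₁ - β₁) * x))
  have i5 := (J_int _ (mA.inter mB)).const_mul (α₁ * α₂)
  have i6 := (J_int _ (mA.inter mD)).const_mul (α₁ * β₂)
  have i7 := (J_int _ (mC.inter mB)).const_mul (β₁ * α₂)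
  have i8 := (J_int _ (mC.inter mD)).const_mul (β₁ * β₂)
  have i9 : IntervalIntegrable (fun _ : ℝ => (1 - α₁ - β₁) * x * ((1 - α₂ - β₂) * y))
      volume 0 1 := intervalIntegrable_const
  -- pointwise decomposition of the integrand
  have hfun : EqOn
      (fun ξ =>
        (α₁ * A.indicator (fun _ => (1 : ℝ)) ξ + (1 - α₁ - β₁) * x +
            β₁ * C.indicator (fun _ => (1 : ℝ)) ξ) *
          (α₂ * B.indicator (fun _ => (1 : ℝ)) ξ + (1 - α₂ - β₂) * y +
            β₂ * D.indicator (fun _ => (1 : ℝ)) ξ))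
      (fun ξ =>
        α₁ * ((1 - α₂ - β₂) * y) * A.indicator (fun _ => (1:ℝ)) ξ +
        α₂ * ((1 - α₁ - β₁) * x) * B.indicator (fun _ => (1:ℝ)) ξ +
        β₁ * ((1 - α₂ - β₂) * y) * C.indicator (fun _ => (1:ℝ)) ξ +
        β₂ * ((1 - α₁ - β₁) * x) * D.indicator (fun _ => (1:ℝ)) ξ +
        α₁ * α₂ * (A ∩ B).indicator (fun _ => (1:ℝ)) ξ +
        α₁ * β₂ * (A ∩ D).indicator (fun _ => (1:ℝ)) ξ +
        β₁ * α₂ * (C ∩ B).indicator (fun _ => (1:ℝ)) ξ +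
        β₁ * β₂ * (C ∩ D).indicator (fun _ => (1:ℝ)) ξ +
        (1 - α₁ - β₁) * x * ((1 - α₂ - β₂) * y))
      (Set.uIcc 0 1) := by
    intro ξ _
    by_cases hA : ξ ∈ A <;> by_cases hB : ξ ∈ B <;> by_cases hC : ξ ∈ C <;>
      by_cases hD : ξ ∈ D <;>
      simp only [Set.indicator_apply, Set.mem_inter_iff, hA, hB, hC, hD,
        if_true, if_false, true_and, false_and, and_true, and_false] <;> ring
  rw [intervalIntegral.integral_congr hfun,
    intervalIntegral.integral_add ((((((((i1.add i2).add i3).add i4).add i5).add i6).add i7).add i8)) i9,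
    intervalIntegral.integral_add (((((((i1.add i2).add i3).add i4).add i5).add i6).add i7)) i8,
    intervalIntegral.integral_add ((((((i1.add i2).add i3).add i4).add i5).add i6)) i7,
    intervalIntegral.integral_add (((((i1.add i2).add i3).add i4).add i5)) i6,
    intervalIntegral.integral_add ((((i1.add i2).add i3).add i4)) i5,
    intervalIntegral.integral_add (((i1.add i2).add i3)) i4,
    intervalIntegral.integral_add ((i1.add i2)) i3,
    intervalIntegral.integral_add i1 i2]
  simp only [intervalIntegral.integral_const_mul, intervalIntegral.integral_const,
    smul_eq_mul, sub_zero, one_mul]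
  rw [vA, vB, vC, vD, vAB, vAD, vCB, vCD]
  ring
end
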